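/- Let G = (V,E,w) be a connected weighted graph and T a maximum spanning tree of G. For any C ⊆ V such that C induces a connected subgraph in both G and T (i.e., C spans a single connected component of T), the minimum edge weight of the maximum spanning tree of the subgraph of G induced by C equals the minimum edge weight of the subtree of T induced by C, and the maximum weight of an edge of G leaving C equals the maximum weight of an edge of T leaving C. -/

import Mathlib

open scoped Classical
noncomputable section

namespace Bal

variable {V : Type*}

/-- Total weight of the edges of a graph. -/
def totalWeight {α : Type*} [Fintype α] (H : SimpleGraph α) (w : Sym2 α → ℝ) : ℝ :=
  ∑ e : Sym2 α, if e ∈ H.edgeSet then w e else 0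

/-- `T` is a maximum spanning tree of `G` w.r.t. the weight `w`. -/
def IsMaxSpanTree {α : Type*} [Fintype α] (G T : SimpleGraph α) (w : Sym2 α → ℝ) : Prop :=
  T ≤ G ∧ T.IsTree ∧
    ∀ T' : SimpleGraph α, T' ≤ G → T'.IsTree → totalWeight T' w ≤ totalWeight T w

/-- Weight function on the induced subgraph on `C`. -/
def subWeight (w : Sym2 V → ℝ) (C : Set V) : Sym2 C → ℝ :=
  fun e => w (e.map Subtype.val)

/-- Edges of `G` with exactly one endpoint in `C`. -/
def outEdges (G : SimpleGraph V) (C : Set V) : Set (Sym2 V) :=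
  {e | e ∈ G.edgeSet ∧ ∃ a b, e = s(a, b) ∧ a ∈ C ∧ b ∉ C}

/-- Edges of `G` with both endpoints in `C`. -/
def inEdges (G : SimpleGraph V) (C : Set V) : Set (Sym2 V) :=
  {e | e ∈ G.edgeSet ∧ ∀ x ∈ e, x ∈ C}

/-- `max(Out(C))`, with the convention `sSup ∅ = 0`. -/
def maxOut (G : SimpleGraph V) (w : Sym2 V → ℝ) (C : Set V) : ℝ :=
  sSup (w '' outEdges G C)

/-- `min(E(C))`, with the convention that it is `1` for singletons. -/
def minIn (G : SimpleGraph V) (w : Sym2 V → ℝ) (C : Set V) : ℝ :=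
  if C.Subsingleton then 1 else sInf (w '' inEdges G C)

/-- `min(MST(C))` : minimum weight of an edge of a maximum spanning tree of `G[C]`,
with the convention that it is `1` for singletons. -/
def minMST [Fintype V] (G : SimpleGraph V) (w : Sym2 V → ℝ) (C : Set V) : ℝ :=
  if C.Subsingleton then 1
  else if h : ∃ T : SimpleGraph C, IsMaxSpanTree (G.induce C) T (subWeight w C) then
    sInf (subWeight w C '' h.choose.edgeSet)
  else 1

/-- Quality measure of a cluster in a graph: `max(Out(C)) / min(MST(C))`. -/
def phi [Fintype V] (G : SimpleGraph V) (w : Sym2 V → ℝ) (C : Set V) : ℝ :=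
  maxOut G w C / minMST G w C

/-- Quality measure of a cluster in a tree: `max(Out(C)) / min(E(C))`. -/
def phiT (G : SimpleGraph V) (w : Sym2 V → ℝ) (C : Set V) : ℝ :=
  maxOut G w C / minIn G w C

/-- `𝒞` is a partition of `U ⊆ V` into `G`-connected parts. -/
def IsPartitionOn (G : SimpleGraph V) (U : Set V) (𝒞 : Set (Set V)) : Prop :=
  (∀ C ∈ 𝒞, C.Nonempty ∧ C ⊆ U ∧ (G.induce C).Connected) ∧
  (∀ C ∈ 𝒞, ∀ C' ∈ 𝒞, C ≠ C' → Disjoint C C') ∧ ⋃₀ 𝒞 = U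

/-- A `k`-clustering of a graph `G` on vertex set `V`. -/
def IsClustering (G : SimpleGraph V) (𝒞 : Set (Set V)) (k : ℕ) : Prop :=
  IsPartitionOn G Set.univ 𝒞 ∧ 𝒞.ncard = k

/-- Evaluation of a clustering of a graph (min-max quality measure, MST-based). -/
def eval [Fintype V] (G : SimpleGraph V) (w : Sym2 V → ℝ) (𝒞 : Set (Set V)) : ℝ :=
  sSup (phi G w '' 𝒞)

/-- Evaluation of a clustering of a tree. -/
def evalT (G : SimpleGraph V) (w : Sym2 V → ℝ) (𝒞 : Set (Set V)) : ℝ :=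
  sSup (phiT G w '' 𝒞)

/-- `𝒞` is an optimal `k`-clustering of `G`. -/
def IsOptimal [Fintype V] (G : SimpleGraph V) (w : Sym2 V → ℝ) (k : ℕ) (𝒞 : Set (Set V)) : Prop :=
  IsClustering G 𝒞 k ∧ ∀ 𝒟, IsClustering G 𝒟 k → eval G w 𝒞 ≤ eval G w 𝒟

/-- All edge weights lie in the open interval `(0,1)`. -/
def weightsOK (G : SimpleGraph V) (w : Sym2 V → ℝ) : Prop :=
  ∀ e ∈ G.edgeSet, 0 < w e ∧ w e < 1

/-- The set of connected components (as vertex sets) of a graph. -/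
def components (G : SimpleGraph V) : Set (Set V) :=
  {C | ∃ x : V, C = {y | G.Reachable x y}}


section Helpers

open SimpleGraph

variable {α : Type*}

lemma adj_of_connected_ne {K : SimpleGraph α} (h : K.Connected) {u v : α} (huv : u ≠ v) :
    ∃ a b, K.Adj a b := by
  obtain ⟨p⟩ := h.preconnected u v
  cases p with
  | nil => exact absurd rfl huv
  | cons h q => exact ⟨_, _, h⟩

lemma exists_cross_adj {K : SimpleGraph α} {A : Set α} :
    ∀ {u v : α}, K.Walk u v → u ∈ A → v ∉ A → ∃ a b, K.Adj a b ∧ a ∈ A ∧ b ∉ A := by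
  intro u v p
  induction p with
  | nil => intro hu hv; exact absurd hu hv
  | @cons u c v h q ih =>
    intro hu hv
    by_cases hc : c ∈ A
    · exact ih hc hv
    · exact ⟨u, c, h, hu, hc⟩

lemma reach_of_delete_aux {T : SimpleGraph α} {x y : α} :
    ∀ {v u : α}, T.Walk v u →
      (T.deleteEdges {s(x,y)}).Reachable v u ∨ (T.deleteEdges {s(x,y)}).Reachable v x ∨
        (T.deleteEdges {s(x,y)}).Reachable v y := by
  intro v u p
  induction p with
  | nil => exact Or.inl (Reachable.refl _)
  | @cons v c _ h q ih =>
    by_cases he : s(v, c) = s(x, y)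
    · rw [Sym2.eq_iff] at he
      rcases he with ⟨rfl, rfl⟩ | ⟨rfl, rfl⟩
      · exact Or.inr (Or.inl (Reachable.refl _))
      · exact Or.inr (Or.inr (Reachable.refl _))
    · have hadj : (T.deleteEdges {s(x,y)}).Adj v c := by
        rw [deleteEdges_adj]
        exact ⟨h, by simpa using he⟩
      rcases ih with hr | hr | hr
      · exact Or.inl (hadj.reachable.trans hr)
      · exact Or.inr (Or.inl (hadj.reachable.trans hr))
      · exact Or.inr (Or.inr (hadj.reachable.trans hr))

lemma reach_of_delete {T : SimpleGraph α} {x y v : α} (p : T.Walk v x) :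
    (T.deleteEdges {s(x,y)}).Reachable v x ∨ (T.deleteEdges {s(x,y)}).Reachable v y := by
  rcases reach_of_delete_aux p with hr | hr | hr
  · exact Or.inl hr
  · exact Or.inl hr
  · exact Or.inr hr

lemma not_reach_delete {T : SimpleGraph α} (hac : T.IsAcyclic) {x y : α} (h : T.Adj x y) :
    ¬ (T.deleteEdges {s(x,y)}).Reachable x y :=
  (isBridge_iff.mp (isAcyclic_iff_forall_adj_isBridge.mp hac h))

lemma exists_cross_path {T : SimpleGraph α} {C : Set α} :
    ∀ {u v : α} (p : T.Walk u v), p.IsPath → u ∈ C → v ∉ C →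
      ∃ x y, T.Adj x y ∧ x ∈ C ∧ y ∉ C ∧ s(x,y) ∈ p.edges ∧
        (T.deleteEdges {s(x,y)}).Reachable u x ∧ (T.deleteEdges {s(x,y)}).Reachable y v := by
  intro u v p
  induction p with
  | nil => intro _ hu hv; exact absurd hu hv
  | @cons u c v h q ih =>
    intro hp hu hv
    rw [Walk.cons_isPath_iff] at hp
    by_cases hc : c ∈ C
    · obtain ⟨x, y, hxy, hxC, hyC, hmem, hux, hyv⟩ := ih hp.1 hc hv
      have hne : s(u, c) ≠ s(x, y) := by
        intro heq
        exact hp.2 (Walk.fst_mem_support_of_mem_edges q (heq ▸ hmem))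
      have hadj : (T.deleteEdges {s(x,y)}).Adj u c := by
        rw [deleteEdges_adj]
        exact ⟨h, by simpa using hne⟩
      exact ⟨x, y, hxy, hxC, hyC, List.mem_cons_of_mem _ hmem,
        hadj.reachable.trans hux, hyv⟩
    · refine ⟨u, c, h, hu, hc, by simp, Reachable.refl _, ?_⟩
      have hq : ∀ e ∈ q.edges, e ∉ ({s(u,c)} : Set (Sym2 α)) := by
        intro e he heq
        rw [Set.mem_singleton_iff] at heq
        exact hp.2 (Walk.fst_mem_support_of_mem_edges q (heq ▸ he))
      exact (q.toDeleteEdges _ hq).reachable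

lemma mem_inEdges {T : SimpleGraph α} {C : Set α} {x y : α}
    (h : T.Adj x y) (hx : x ∈ C) (hy : y ∈ C) : s(x,y) ∈ inEdges T C := by
  refine ⟨T.mem_edgeSet.mpr h, ?_⟩
  intro z hz
  rw [Sym2.mem_iff] at hz
  rcases hz with rfl | rfl <;> assumption

lemma exists_of_mem_inEdges {T : SimpleGraph α} {C : Set α} {e : Sym2 α}
    (he : e ∈ inEdges T C) : ∃ x y, e = s(x,y) ∧ T.Adj x y ∧ x ∈ C ∧ y ∈ C := by
  induction e using Sym2.ind with
  | _ x y =>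
    exact ⟨x, y, rfl, T.mem_edgeSet.mp he.1, he.2 x (by simp), he.2 y (by simp)⟩

lemma subWeight_mk {w : Sym2 α → ℝ} {C : Set α} (u v : C) :
    subWeight w C s(u,v) = w s(↑u, ↑v) := by
  unfold subWeight
  rw [Sym2.map_pair_eq]

lemma exchange {α : Type*} [Fintype α] {H T : SimpleGraph α} {w : Sym2 α → ℝ}
    (hT : IsMaxSpanTree H T w) {x y a b : α} (hxy : T.Adj x y) (hab : H.Adj a b)
    (hax : (T.deleteEdges {s(x,y)}).Reachable a x)
    (hby : (T.deleteEdges {s(x,y)}).Reachable b y) :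
    w s(a,b) ≤ w s(x,y) := by
  obtain ⟨hle, htree, hmax⟩ := hT
  set D := T.deleteEdges {s(x,y)} with hD
  have hbridge : ¬ D.Reachable x y := not_reach_delete htree.2 hxy
  by_cases heq : s(a,b) = s(x,y)
  · rw [heq]
  have hgnT : s(a,b) ∉ T.edgeSet := by
    intro hg
    have hDadj : D.Adj a b := by
      rw [hD, deleteEdges_adj]
      exact ⟨T.mem_edgeSet.mp hg, by simpa using heq⟩
    exact hbridge (hax.symm.trans (hDadj.reachable.trans hby))
  set T' := D ⊔ SimpleGraph.fromEdgeSet {s(a,b)} with hT'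
  have hsingle : ({s(a,b)} : Set (Sym2 α)) \ Sym2.diagSet = {s(a,b)} := by
    ext e
    simp only [Set.mem_diff, Set.mem_singleton_iff, Set.mem_setOf_eq, Sym2.mem_diagSet, and_iff_left_iff_imp]
    rintro rfl h
    exact hab.ne (Sym2.mk_isDiag_iff.mp h)
  have hedge : T'.edgeSet = (T.edgeSet \ {s(x,y)}) ∪ {s(a,b)} := by
    rw [hT', edgeSet_sup, hD, edgeSet_deleteEdges, edgeSet_fromEdgeSet, hsingle]
  have hT'le : T' ≤ H := by
    refine sup_le ((deleteEdges_le _).trans hle) ?_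
    intro u v huv
    rw [fromEdgeSet_adj, Set.mem_singleton_iff, Sym2.eq_iff] at huv
    rcases huv.1 with ⟨rfl, rfl⟩ | ⟨rfl, rfl⟩
    · exact hab
    · exact hab.symm
  have hfadj : T'.Adj a b := by
    apply le_sup_right (b := SimpleGraph.fromEdgeSet {s(a,b)})
    rw [fromEdgeSet_adj]
    exact ⟨rfl, hab.ne⟩
  have hDle : D ≤ T' := le_sup_left
  have hreachx : ∀ v, T'.Reachable v x := by
    intro v
    obtain ⟨p⟩ := htree.1.preconnected v x
    rcases reach_of_delete (y := y) p with hr | hr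
    · exact hr.mono hDle
    · exact ((hr.mono hDle).trans ((hby.mono hDle).symm)).trans
        (hfadj.symm.reachable.trans (hax.mono hDle))
  have hconn' : T'.Connected := by
    rw [connected_iff]
    exact ⟨fun u v => (hreachx u).trans (hreachx v).symm, htree.1.nonempty⟩
  have hDeq : T'.deleteEdges {s(a,b)} ≤ D := by
    rw [← edgeSet_subset_edgeSet, edgeSet_deleteEdges, hedge, hD, edgeSet_deleteEdges]
    intro e he
    rcases he.1 with h1 | h1
    · exact h1
    · exact absurd h1 he.2
  have hgbridge : T'.IsBridge s(a,b) := by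
    rw [isBridge_iff]
    refine fun hr => ?_
    have : D.Reachable a b := Reachable.mono hDeq hr
    exact hbridge (hax.symm.trans (this.trans hby))
  have hacyc : T'.IsAcyclic := by
    intro v c hc
    by_cases hg : s(a,b) ∈ c.edges
    · exact ((isBridge_iff_adj_and_forall_cycle_notMem hfadj).mp hgbridge) c hc hg
    · have hsub : ∀ e ∈ c.edges, e ∈ T.edgeSet := by
        intro e he
        have : e ∈ T'.edgeSet := c.edges_subset_edgeSet he
        rw [hedge] at this
        rcases this with h1 | h1
        · exact h1.1
        · exact absurd (h1 ▸ he) hg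
      exact htree.2 _ (hc.transfer hsub)
  have hTxy : s(x,y) ∈ T.edgeSet := T.mem_edgeSet.mpr hxy
  have hw : totalWeight T' w = totalWeight T w - w s(x,y) + w s(a,b) := by
    have h1 : w s(x,y) = ∑ e : Sym2 α, if e = s(x,y) then w e else 0 :=
      (Fintype.sum_ite_eq' (s(x,y)) (fun e => w e)).symm
    have h2 : w s(a,b) = ∑ e : Sym2 α, if e = s(a,b) then w e else 0 :=
      (Fintype.sum_ite_eq' (s(a,b)) (fun e => w e)).symm
    rw [h1, h2]
    unfold totalWeight
    rw [← Finset.sum_sub_distrib, ← Finset.sum_add_distrib]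
    apply Finset.sum_congr rfl
    intro e _
    by_cases hxe : e = s(x,y)
    · by_cases hae : e = s(a,b)
      · exact absurd (hae ▸ hxe) heq
      · subst hxe
        have hnm : s(x,y) ∉ T'.edgeSet := by
          rw [hedge]
          rintro (⟨-, h⟩ | h)
          · exact h rfl
          · exact heq (Set.mem_singleton_iff.mp h).symm
        rw [if_neg hnm, if_pos hTxy, if_pos rfl, if_neg hae]
        ring
    · by_cases hae : e = s(a,b)
      · subst hae
        have hm : s(a,b) ∈ T'.edgeSet := by rw [hedge]; exact Or.inr rfl
        rw [if_pos hm, if_neg hgnT, if_neg hxe, if_pos rfl]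
        ring
      · have hmem : e ∈ T'.edgeSet ↔ e ∈ T.edgeSet := by
          rw [hedge]
          constructor
          · rintro (⟨h, -⟩ | h)
            · exact h
            · exact absurd (Set.mem_singleton_iff.mp h) hae
          · intro h
            exact Or.inl ⟨h, hxe⟩
        by_cases he : e ∈ T.edgeSet
        · rw [if_pos (hmem.mpr he), if_pos he, if_neg hxe, if_neg hae]
          ring
        · rw [if_neg (fun hh => he (hmem.mp hh)), if_neg he, if_neg hxe, if_neg hae]
          ring
  have hle' := hmax T' hT'le ⟨hconn', hacyc⟩
  rw [hw] at hle'
  linarith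

end Helpers

/-- for `C` connected in both `G` and a maximum spanning tree `T`,
the min weight of a max spanning tree of `G[C]` equals the min weight of the induced
subtree of `T`, and the max outgoing weights agree. -/
theorem statement6 {V : Type*} [Fintype V] (G : SimpleGraph V) (w : Sym2 V → ℝ)
    (hconn : G.Connected) (T : SimpleGraph V) (hT : IsMaxSpanTree G T w)
    (C : Set V) (hCG : (G.induce C).Connected) (hCT : (T.induce C).Connected) :
    (∀ T_C : SimpleGraph C, IsMaxSpanTree (G.induce C) T_C (subWeight w C) →
      sInf (subWeight w C '' T_C.edgeSet) = sInf (w '' inEdges T C)) ∧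
    maxOut G w C = maxOut T w C := by
  classical
  have hTle : T ≤ G := hT.1
  have hTtree : T.IsTree := hT.2.1
  constructor
  · intro T_C hTC
    by_cases hsub : C.Subsingleton
    · have h1 : subWeight w C '' T_C.edgeSet = ∅ := by
        rw [Set.image_eq_empty]
        ext e
        simp only [Set.mem_empty_iff_false, iff_false]
        induction e using Sym2.ind with
        | _ u v =>
          intro he
          exact (T_C.mem_edgeSet.mp he).ne (Subtype.ext (hsub u.2 v.2))
      have h2 : w '' inEdges T C = ∅ := by
        rw [Set.image_eq_empty]
        ext e
        simp only [Set.mem_empty_iff_false, iff_false]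
        intro he
        obtain ⟨x, y, rfl, hadj, hx, hy⟩ := exists_of_mem_inEdges he
        exact hadj.ne (hsub hx hy)
      rw [h1, h2]
    · obtain ⟨c, hc, d, hd, hcd⟩ := Set.not_subsingleton_iff.mp hsub
      have hfin1 : (subWeight w C '' T_C.edgeSet).Finite := (Set.toFinite _).image _
      have hfin2 : (w '' inEdges T C).Finite := (Set.toFinite _).image _
      have hne1 : (subWeight w C '' T_C.edgeSet).Nonempty := by
        obtain ⟨u, v, huv⟩ := adj_of_connected_ne hTC.2.1.1
          (show (⟨c, hc⟩ : C) ≠ ⟨d, hd⟩ from fun h => hcd (congrArg Subtype.val h))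
        exact ⟨subWeight w C s(u,v), ⟨s(u,v), T_C.mem_edgeSet.mpr huv, rfl⟩⟩
      have hne2 : (w '' inEdges T C).Nonempty := by
        obtain ⟨u, v, huv⟩ := adj_of_connected_ne hCT
          (show (⟨c, hc⟩ : C) ≠ ⟨d, hd⟩ from fun h => hcd (congrArg Subtype.val h))
        have huv' : T.Adj ↑u ↑v := huv
        exact ⟨w s(↑u,↑v), ⟨s(↑u,↑v), mem_inEdges huv' u.2 v.2, rfl⟩⟩
      apply le_antisymm
      · -- sInf LHS ≤ sInf RHS
        obtain ⟨e, he, heq⟩ := hne2.csInf_mem hfin2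
        obtain ⟨x, y, rfl, hxy, hx, hy⟩ := exists_of_mem_inEdges he
        set D := T.deleteEdges {s(x,y)} with hD
        set A : Set C := {z : C | D.Reachable ↑z x} with hA
        obtain ⟨walk⟩ := hTC.2.1.1.preconnected ⟨x, hx⟩ ⟨y, hy⟩
        have hxA : (⟨x, hx⟩ : C) ∈ A := SimpleGraph.Reachable.refl _
        have hyA : (⟨y, hy⟩ : C) ∉ A := fun hr => (not_reach_delete hTtree.2 hxy) hr.symm
        obtain ⟨p, q, hpq, hpA, hqA⟩ := exists_cross_adj walk hxA hyA
        have hG : G.Adj ↑p ↑q := hTC.1 hpq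
        have hqy : D.Reachable ↑q y := by
          obtain ⟨wq⟩ := hTtree.1.preconnected ↑q x
          rcases reach_of_delete (y := y) wq with hr | hr
          · exact absurd hr hqA
          · exact hr
        have hkey := exchange hT hxy hG hpA hqy
        calc sInf (subWeight w C '' T_C.edgeSet)
            ≤ subWeight w C s(p,q) :=
              csInf_le hfin1.bddBelow ⟨s(p,q), T_C.mem_edgeSet.mpr hpq, rfl⟩
          _ = w s(↑p,↑q) := subWeight_mk p q
          _ ≤ w s(x,y) := hkey
          _ = sInf (w '' inEdges T C) := heq
      · -- sInf RHS ≤ sInf LHS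
        obtain ⟨e, he, heq⟩ := hne1.csInf_mem hfin1
        induction e using Sym2.ind with
        | _ x y =>
        have hxy : T_C.Adj x y := T_C.mem_edgeSet.mp he
        set D := T_C.deleteEdges {s(x,y)} with hD
        set A : Set C := {z : C | D.Reachable z x} with hA
        obtain ⟨walk⟩ := hCT.preconnected x y
        have hxA : x ∈ A := SimpleGraph.Reachable.refl _
        have hyA : y ∉ A := fun hr => (not_reach_delete hTC.2.1.2 hxy) hr.symm
        obtain ⟨p, q, hpq, hpA, hqA⟩ := exists_cross_adj walk hxA hyA
        have hTpq : T.Adj ↑p ↑q := hpq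
        have hGC : (G.induce C).Adj p q := hTle hTpq
        have hqy : D.Reachable q y := by
          obtain ⟨wq⟩ := hTC.2.1.1.preconnected q x
          rcases reach_of_delete (y := y) wq with hr | hr
          · exact absurd hr hqA
          · exact hr
        have hkey := exchange hTC hxy hGC hpA hqy
        calc sInf (w '' inEdges T C)
            ≤ w s(↑p,↑q) :=
              csInf_le hfin2.bddBelow ⟨s(↑p,↑q), mem_inEdges hTpq p.2 q.2, rfl⟩
          _ = subWeight w C s(p,q) := (subWeight_mk p q).symm
          _ ≤ subWeight w C s(x,y) := hkey
          _ = sInf (subWeight w C '' T_C.edgeSet) := heq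
  · unfold maxOut
    by_cases hout : outEdges G C = ∅
    · have hout' : outEdges T C = ∅ := by
        rw [Set.eq_empty_iff_forall_notMem] at hout ⊢
        intro e he
        exact hout e ⟨(SimpleGraph.edgeSet_subset_edgeSet.mpr hTle) he.1, he.2⟩
      rw [hout, hout']
    · have hGne : (outEdges G C).Nonempty := Set.nonempty_iff_ne_empty.mpr hout
      have hstep : ∀ e ∈ outEdges G C, ∃ f ∈ outEdges T C, w e ≤ w f := by
        rintro e ⟨heG, a, b, rfl, haC, hbC⟩
        have hab : G.Adj a b := G.mem_edgeSet.mp heG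
        obtain ⟨wp⟩ := hTtree.1.preconnected a b
        obtain ⟨x, y, hxy, hxC, hyC, -, hax, hyb⟩ :=
          exists_cross_path wp.toPath.1 wp.toPath.2 haC hbC
        exact ⟨s(x,y), ⟨T.mem_edgeSet.mpr hxy, x, y, rfl, hxC, hyC⟩,
          exchange hT hxy hab hax hyb.symm⟩
      obtain ⟨e0, he0⟩ := id hGne
      obtain ⟨f0, hf0, -⟩ := hstep e0 he0
      apply le_antisymm
      · apply csSup_le (Set.Nonempty.image w hGne)
        rintro r ⟨e, he, rfl⟩
        obtain ⟨f, hf, hle⟩ := hstep e he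
        exact hle.trans (le_csSup ((Set.toFinite _).image w).bddAbove ⟨f, hf, rfl⟩)
      · apply csSup_le (Set.Nonempty.image w ⟨f0, hf0⟩)
        rintro r ⟨f, hf, rfl⟩
        exact le_csSup ((Set.toFinite _).image w).bddAbove
          ⟨f, ⟨(SimpleGraph.edgeSet_subset_edgeSet.mpr hTle) hf.1, hf.2⟩, rfl⟩


end Bal
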